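/- Let n ≥ 3 and m ≥ n. The set of positive integers whose n-decomposition uses only summands F_{n,c} with indices c ≤ m is exactly the set of integers from 1 to F_{n,m+1} - 1 inclusive. -/

import Mathlib

section aux
variable (n : ℕ) (hn : 3 ≤ n) (F : ℕ → ℕ)
    (hF1 : ∀ i, 1 ≤ i → i ≤ n → F i = 1)
    (hFrec : ∀ m, n ≤ m → F (m + 1) = F m + F (m + 1 - n))

include hn hF1 hFrec

lemma myF_pos : ∀ i, 1 ≤ i → 1 ≤ F i := by
  intro i
  induction i using Nat.strong_induction_on with
  | _ i ih =>
    intro hi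
    rcases le_or_gt i n with h | h
    · rw [hF1 i hi h]
    · obtain ⟨m, rfl⟩ : ∃ m, i = m + 1 := ⟨i - 1, by omega⟩
      rw [hFrec m (by omega)]
      have := ih m (by omega) (by omega)
      omega

lemma myF_mono : ∀ i j, 1 ≤ i → i ≤ j → F i ≤ F j := by
  have step : ∀ i, 1 ≤ i → F i ≤ F (i + 1) := by
    intro i hi
    rcases le_or_gt n i with h | h
    · rw [hFrec i h]
      have := myF_pos n hn F hF1 hFrec (i + 1 - n) (by omega)
      omega
    · rw [hF1 i hi (by omega), hF1 (i+1) (by omega) (by omega)]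
  intro i j hi hij
  induction j with
  | zero => omega
  | succ j ih =>
    rcases Nat.lt_or_ge i (j+1) with h | h
    · exact le_trans (ih (by omega)) (step j (by omega))
    · have : i = j + 1 := by omega
      subst this; rfl

lemma mysum_lt : ∀ L : List ℕ, (∀ c ∈ L, n ≤ c) → L.Chain' (fun a b => a + n ≤ b) →
    ∀ M, 1 ≤ M → (∀ c ∈ L, c ≤ M) → (L.map F).sum < F (M + 1) := by
  intro L
  induction L using List.reverseRecOn with
  | nil =>
    intro _ _ M hM _
    simpa using Nat.succ_le_iff.mp (myF_pos n hn F hF1 hFrec (M+1) (by omega))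
  | append_singleton L c ih =>
    intro hge hch M hM hle
    haveI : IsTrans ℕ (fun a b => a + n ≤ b) := ⟨fun a b c h1 h2 => by omega⟩
    replace hch := List.isChain_iff_pairwise.mp hch
    have hpw := (List.pairwise_append.mp hch)
    have hchL : L.Chain' (fun a b => a + n ≤ b) := List.isChain_iff_pairwise.mpr hpw.1
    have hlast : ∀ a ∈ L, a + n ≤ c := fun a ha => hpw.2.2 a ha c (by simp)
    have hcn : n ≤ c := hge c (by simp)
    have hcM : c ≤ M := hle c (by simp)
    have hMn : n ≤ M := le_trans hcn hcM
    have hrecM : F (M + 1) = F M + F (M + 1 - n) := hFrec M hMn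
    have hFM1 : 1 ≤ F (M + 1 - n) := myF_pos n hn F hF1 hFrec _ (by omega)
    rcases L with _ | ⟨a, L'⟩
    · simp only [List.nil_append, List.map_cons, List.map_nil, List.sum_cons, List.sum_nil]
      have := myF_mono n hn F hF1 hFrec c M (by omega) hcM
      omega
    · set K := a :: L' with hK
      have hKne : K ≠ [] := by simp [hK]
      have hcnn : n ≤ c - n := by
        have := hge a (by simp [hK])
        have := hlast a (by simp [hK])
        omega
      have hIH := ih (fun x hx => hge x (by simp [hx])) hchL (c - n) (by omega)
        (fun x hx => by have := hlast x hx; omega)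
      have heq : c - n + 1 = c + 1 - n := by omega
      rw [heq] at hIH
      have hrecc : F (c + 1) = F c + F (c + 1 - n) := hFrec c hcn
      have hmono : F (c + 1) ≤ F (M + 1) := myF_mono n hn F hF1 hFrec _ _ (by omega) (by omega)
      rw [List.map_append, List.sum_append]
      simp only [List.map_cons, List.map_nil, List.sum_cons, List.sum_nil]
      omega

lemma myexists_decomp : ∀ M, n ≤ M → ∀ x, 1 ≤ x → x < F (M + 1) →
    ∃ L : List ℕ, (∀ c ∈ L, n ≤ c) ∧ L.Chain' (fun a b => a + n ≤ b) ∧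
      (L.map F).sum = x ∧ ∀ c ∈ L, c ≤ M := by
  intro M
  induction M using Nat.strong_induction_on with
  | _ M ih =>
    intro hMn x hx hxF
    have hrecM : F (M + 1) = F M + F (M + 1 - n) := hFrec M hMn
    rcases le_or_gt (F M) x with hxM | hxM
    · -- F M ≤ x
      rcases eq_or_lt_of_le hxM with heq | hlt
      · exact ⟨[M], by simpa using hMn, List.isChain_singleton M, by simp [heq], by simp⟩
      · rcases le_or_gt (2 * n) M with h2n | h2n
        · obtain ⟨L', hL1, hL2, hL3, hL4⟩ := ih (M - n) (by omega) (by omega) (x - F M)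
            (by omega) (by rw [show M - n + 1 = M + 1 - n by omega]; omega)
          refine ⟨L' ++ [M], ?_, ?_, ?_, ?_⟩
          · intro c hc
            rcases List.mem_append.mp hc with h | h
            · exact hL1 c h
            · simp at h; omega
          · refine List.isChain_append.mpr ?_
            refine ⟨hL2, List.isChain_singleton _, ?_⟩
            intro a ha b hb
            simp at hb
            have := hL4 a (List.mem_of_mem_getLast? ha)
            omega
          · rw [List.map_append, List.sum_append, hL3]
            simp; omega
          · intro c hc
            rcases List.mem_append.mp hc with h | h
            · have := hL4 c h; omega
            · simp at h; omega
        · have : F (M + 1 - n) = 1 := hF1 _ (by omega) (by omega)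
          omega
    · -- x < F M : M > n
      have hMne : n < M := by
        rcases lt_or_eq_of_le hMn with h | h
        · exact h
        · rw [hF1 M (by omega) (by omega)] at hxM
          omega
      obtain ⟨L, h1, h2, h3, h4⟩ := ih (M - 1) (by omega) (by omega) x hx
        (by rw [show M - 1 + 1 = M by omega]; exact hxM)
      exact ⟨L, h1, h2, h3, fun c hc => by have := h4 c hc; omega⟩

end aux

/-- Let `n ≥ 3` and `m ≥ n`.  The set of positive integers whose
`n`-decomposition uses only summands `F c` with indices `c ≤ m` is exactly
`{1, 2, …, F (m+1) - 1}`. -/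
theorem small_index_decompositions (n : ℕ) (hn : 3 ≤ n) (F : ℕ → ℕ)
    (hF1 : ∀ i, 1 ≤ i → i ≤ n → F i = 1)
    (hFrec : ∀ m, n ≤ m → F (m + 1) = F m + F (m + 1 - n))
    (m : ℕ) (hm : n ≤ m) :
    {x : ℕ | 0 < x ∧ ∃ L : List ℕ, (∀ c ∈ L, n ≤ c) ∧
        L.Chain' (fun a b => a + n ≤ b) ∧ (L.map F).sum = x ∧ ∀ c ∈ L, c ≤ m}
      = Set.Icc 1 (F (m + 1) - 1) := by
  ext x
  simp only [Set.mem_setOf_eq, Set.mem_Icc]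
  have hFpos : 1 ≤ F (m + 1) := myF_pos n hn F hF1 hFrec _ (by omega)
  constructor
  · rintro ⟨hx, L, h1, h2, h3, h4⟩
    have := mysum_lt n hn F hF1 hFrec L h1 h2 m (by omega) h4
    omega
  · rintro ⟨hx1, hx2⟩
    obtain ⟨L, h1, h2, h3, h4⟩ := myexists_decomp n hn F hF1 hFrec m hm x hx1 (by omega)
    exact ⟨by omega, L, h1, h2, h3, h4⟩
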